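/- Let H be a Hilbert space, let 𝓛 ⊆ B(H) be a convex cone of positive operators containing the identity, let ξ ∈ H, and for g ∈ H define ‖g‖_* = inf{⟨Lξ,ξ⟩^{1/2} : L ∈ 𝓛, L ≥ g⊗g}. Then: (a) ‖·‖_* is a semi-norm on H; (b) for all f ∈ H, sup{|⟨f,g⟩| : g ∈ H, ‖g‖_* ≤ 1} = sup{⟨Lf,f⟩^{1/2} : L ∈ 𝓛, ⟨Lξ,ξ⟩ ≤ 1}. -/

import Mathlib

set_option synthInstance.maxHeartbeats 1000000
set_option maxHeartbeats 1000000

noncomputable section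
open scoped ENNReal

namespace ConeNorm

variable {H : Type*}

/-- The rank one operator `h ↦ ⟨h,g⟩ g`. -/
def rankOne [NormedAddCommGroup H] [InnerProductSpace ℂ H] (g : H) :
    H →L[ℂ] H :=
  (ContinuousLinearMap.toSpanSingleton ℂ g).comp ((innerSL ℂ) g)

section Helpers

variable [NormedAddCommGroup H] [InnerProductSpace ℂ H] [CompleteSpace H]

lemma rankOne_apply (g x : H) : rankOne g x = (inner ℂ g x : ℂ) • g := rfl

lemma rankOne_zero : rankOne (0 : H) = 0 := by
  ext x
  simp [rankOne_apply]

lemma inner_rankOne (g x : H) :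
    (inner ℂ (rankOne g x) x : ℂ) = ((‖(inner ℂ g x : ℂ)‖ ^ 2 : ℝ) : ℂ) := by
  rw [rankOne_apply, inner_smul_left, RCLike.conj_mul]
  norm_cast

/-- Cauchy–Schwarz for a positive operator. -/
lemma cs {L : H →L[ℂ] H} (hL : L.IsPositive) (x y : H) :
    ‖(inner ℂ (L x) y : ℂ)‖ ^ 2 ≤ (inner ℂ (L x) x : ℂ).re * (inner ℂ (L y) y : ℂ).re := by
  have h0 : 0 ≤ L := (ContinuousLinearMap.nonneg_iff_isPositive L).2 hL
  set S := CFC.sqrt L with hSdef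
  have hS : 0 ≤ S := CFC.sqrt_nonneg L
  have hmul : S * S = L := CFC.sqrt_mul_sqrt_self L h0
  have hSsa : IsSelfAdjoint S := IsSelfAdjoint.of_nonneg hS
  have key : ∀ u v : H, (inner ℂ (L u) v : ℂ) = inner ℂ (S u) (S v) := by
    intro u v
    rw [← hmul]
    have := hSsa.adjoint_eq
    calc (inner ℂ ((S * S) u) v : ℂ) = inner ℂ (S (S u)) v := rfl
      _ = inner ℂ (S u) (S v) := by
          rw [← ContinuousLinearMap.adjoint_inner_left, this]
  have h1 : ‖(inner ℂ (L x) y : ℂ)‖ ≤ ‖S x‖ * ‖S y‖ := by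
    rw [key]; exact norm_inner_le_norm _ _
  have hx : (inner ℂ (L x) x : ℂ).re = ‖S x‖ ^ 2 := by
    rw [key, ← inner_self_eq_norm_sq (𝕜 := ℂ)]; rfl
  have hy : (inner ℂ (L y) y : ℂ).re = ‖S y‖ ^ 2 := by
    rw [key, ← inner_self_eq_norm_sq (𝕜 := ℂ)]; rfl
  rw [hx, hy]
  calc ‖(inner ℂ (L x) y : ℂ)‖ ^ 2 ≤ (‖S x‖ * ‖S y‖) ^ 2 := by
        apply pow_le_pow_left₀ (norm_nonneg _) h1
    _ = ‖S x‖ ^ 2 * ‖S y‖ ^ 2 := by ring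

lemma inner_self_re (x : H) : (inner ℂ x x : ℂ).re = ‖x‖ ^ 2 := by
  rw [← inner_self_eq_norm_sq (𝕜 := ℂ)]; rfl

lemma re_complex (z : ℂ) : RCLike.re z = z.re := rfl

lemma isPositive_complex {L : H →L[ℂ] H} :
    L.IsPositive ↔ ∀ x : H, (((inner ℂ (L x) x : ℂ).re : ℂ) = inner ℂ (L x) x ∧
      0 ≤ (inner ℂ (L x) x : ℂ).re) := by
  rw [ContinuousLinearMap.isPositive_iff_complex]
  rfl

lemma sub_rankOne_isPositive {L : H →L[ℂ] H} (hL : L.IsPositive) {g : H}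
    (hpt : ∀ x : H, ‖(inner ℂ g x : ℂ)‖ ^ 2 ≤ (inner ℂ (L x) x : ℂ).re) :
    (L - rankOne g).IsPositive := by
  rw [isPositive_complex]
  intro x
  have hLr := (isPositive_complex.1 hL x).1
  have key : (inner ℂ ((L - rankOne g) x) x : ℂ) =
      (((inner ℂ (L x) x : ℂ).re - ‖(inner ℂ g x : ℂ)‖ ^ 2 : ℝ) : ℂ) := by
    rw [ContinuousLinearMap.sub_apply, inner_sub_left, inner_rankOne,
      Complex.ofReal_sub, hLr]
  rw [key]
  constructor
  · norm_cast
  · simp only [Complex.ofReal_re]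
    linarith [hpt x]

lemma le_of_sub_rankOne {L : H →L[ℂ] H} {g : H}
    (hp : (L - rankOne g).IsPositive) (x : H) :
    ‖(inner ℂ g x : ℂ)‖ ^ 2 ≤ (inner ℂ (L x) x : ℂ).re := by
  have h0 : (0:ℝ) ≤ RCLike.re (inner ℂ ((L - rankOne g) x) x : ℂ) :=
    hp.re_inner_nonneg_left x
  rw [re_complex] at h0
  have h1 : (inner ℂ ((L - rankOne g) x) x : ℂ) =
      inner ℂ (L x) x - ((‖(inner ℂ g x : ℂ)‖ ^ 2 : ℝ) : ℂ) := by
    rw [ContinuousLinearMap.sub_apply, inner_sub_left, inner_rankOne]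
  rw [h1] at h0
  simp only [Complex.sub_re, Complex.ofReal_re] at h0
  linarith

lemma isPositive_real_smul {L : H →L[ℂ] H} (hL : L.IsPositive) {c : ℝ} (hc : 0 ≤ c) :
    (((c : ℂ)) • L).IsPositive := by
  rw [isPositive_complex] at hL ⊢
  intro x
  obtain ⟨h1, h2⟩ := hL x
  have he : (inner ℂ (((c : ℂ) • L) x) x : ℂ) = ((c * (inner ℂ (L x) x : ℂ).re : ℝ) : ℂ) := by
    rw [ContinuousLinearMap.smul_apply, inner_smul_left, Complex.conj_ofReal,
      Complex.ofReal_mul, h1]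
  rw [he]
  exact ⟨by simp, by simpa using mul_nonneg hc h2⟩

lemma re_inner_real_smul (c : ℝ) (L : H →L[ℂ] H) (x : H) :
    (inner ℂ ((((c : ℂ)) • L) x) x : ℂ).re = c * (inner ℂ (L x) x : ℂ).re := by
  rw [ContinuousLinearMap.smul_apply, inner_smul_left, Complex.conj_ofReal]
  simp [Complex.mul_re]

lemma real_le_of_forall_pos {a b : ℝ} (h : ∀ ε > 0, a ≤ b + ε) : a ≤ b := by
  by_contra h'
  push_neg at h'
  have := h ((a - b) / 2) (by linarith)
  linarith

end Helpers

/-- Lemma 5.1: for a convex cone `𝓛` of positive operators containing the identity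
and a vector `ξ`, the function `‖g‖_* = inf {⟨Lξ,ξ⟩^{1/2} : L ∈ 𝓛, L ≥ g ⊗ g}` is
a seminorm, and the two suprema in (b) agree (in `ℝ≥0∞`, both being allowed to
be infinite). -/
theorem cone_seminorm_and_duality
    [NormedAddCommGroup H] [InnerProductSpace ℂ H] [CompleteSpace H]
    (𝓛 : Set (H →L[ℂ] H))
    (hpos : ∀ L ∈ 𝓛, L.IsPositive)
    (hadd : ∀ L₁ ∈ 𝓛, ∀ L₂ ∈ 𝓛, L₁ + L₂ ∈ 𝓛)
    (hsmul : ∀ c : ℝ, 0 ≤ c → ∀ L ∈ 𝓛, (c : ℂ) • L ∈ 𝓛)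
    (hone : (1 : H →L[ℂ] H) ∈ 𝓛)
    (ξ : H)
    (ns : H → ℝ)
    (hns : ∀ g : H, ns g =
      sInf {x : ℝ | ∃ L ∈ 𝓛, (L - rankOne g).IsPositive ∧
        x = Real.sqrt ((inner ℂ (L ξ) ξ : ℂ).re)}) :
    -- (a) ‖·‖_* is a seminorm
    ((∀ g : H, 0 ≤ ns g) ∧
     (∀ (c : ℂ) (g : H), ns (c • g) = ‖c‖ * ns g) ∧
     (∀ g h : H, ns (g + h) ≤ ns g + ns h)) ∧
    -- (b) the duality formula
    (∀ f : H,
      (⨆ (g : H) (_ : ns g ≤ 1), ENNReal.ofReal ‖(inner ℂ g f : ℂ)‖) =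
        ⨆ (L : H →L[ℂ] H) (_ : L ∈ 𝓛) (_ : (inner ℂ (L ξ) ξ : ℂ).re ≤ 1),
          ENNReal.ofReal (Real.sqrt ((inner ℂ (L f) f : ℂ).re))) := by
  -- basic facts
  have hre : ∀ L ∈ 𝓛, ∀ x : H, 0 ≤ (inner ℂ (L x) x : ℂ).re := by
    intro L hL x
    exact (isPositive_complex.1 (hpos L hL) x).2
  have hbdd : ∀ g : H, BddBelow {x : ℝ | ∃ L ∈ 𝓛, (L - rankOne g).IsPositive ∧
      x = Real.sqrt ((inner ℂ (L ξ) ξ : ℂ).re)} := by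
    intro g
    refine ⟨0, ?_⟩
    rintro x ⟨L, hL, hp, rfl⟩
    exact Real.sqrt_nonneg _
  have hne : ∀ g : H, {x : ℝ | ∃ L ∈ 𝓛, (L - rankOne g).IsPositive ∧
      x = Real.sqrt ((inner ℂ (L ξ) ξ : ℂ).re)}.Nonempty := by
    intro g
    have hmem : ((‖g‖ ^ 2 : ℝ) : ℂ) • (1 : H →L[ℂ] H) ∈ 𝓛 :=
      hsmul _ (sq_nonneg _) _ hone
    have hp : (((‖g‖ ^ 2 : ℝ) : ℂ) • (1 : H →L[ℂ] H) - rankOne g).IsPositive := by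
      apply sub_rankOne_isPositive
        (isPositive_real_smul ContinuousLinearMap.isPositive_one (sq_nonneg _))
      intro x
      rw [re_inner_real_smul]
      have h1 : ‖(inner ℂ g x : ℂ)‖ ≤ ‖g‖ * ‖x‖ := norm_inner_le_norm g x
      have h2 : ((inner ℂ ((1 : H →L[ℂ] H) x) x : ℂ)).re = ‖x‖ ^ 2 := by
        rw [ContinuousLinearMap.one_apply, inner_self_re]
      rw [h2]
      calc ‖(inner ℂ g x : ℂ)‖ ^ 2 ≤ (‖g‖ * ‖x‖) ^ 2 :=
            pow_le_pow_left₀ (norm_nonneg _) h1 2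
        _ = ‖g‖ ^ 2 * ‖x‖ ^ 2 := by ring
    exact ⟨_, _, hmem, hp, rfl⟩
  have ns_nonneg : ∀ g : H, 0 ≤ ns g := by
    intro g
    rw [hns]
    apply Real.sInf_nonneg
    rintro x ⟨L, hL, hp, rfl⟩
    exact Real.sqrt_nonneg _
  have ns_le : ∀ (g : H) (L : H →L[ℂ] H), L ∈ 𝓛 → (L - rankOne g).IsPositive →
      ns g ≤ Real.sqrt ((inner ℂ (L ξ) ξ : ℂ).re) := by
    intro g L hL hp
    rw [hns]
    exact csInf_le (hbdd g) ⟨L, hL, hp, rfl⟩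
  have ns_approx : ∀ (g : H), ∀ ε > (0:ℝ), ∃ L ∈ 𝓛, (L - rankOne g).IsPositive ∧
      Real.sqrt ((inner ℂ (L ξ) ξ : ℂ).re) < ns g + ε := by
    intro g ε hε
    have hlt : sInf {x : ℝ | ∃ L ∈ 𝓛, (L - rankOne g).IsPositive ∧
        x = Real.sqrt ((inner ℂ (L ξ) ξ : ℂ).re)} < ns g + ε := by
      rw [← hns]; linarith
    obtain ⟨x, hx, hlt'⟩ := exists_lt_of_csInf_lt (hne g) hlt
    obtain ⟨L, hL, hp, rfl⟩ := hx
    exact ⟨L, hL, hp, hlt'⟩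
  -- ns 0 = 0
  have ns_zero : ns 0 = 0 := by
    have h0 : (0 : H →L[ℂ] H) ∈ 𝓛 := by
      have := hsmul 0 le_rfl 1 hone
      simpa using this
    have hp : ((0 : H →L[ℂ] H) - rankOne (0:H)).IsPositive := by
      rw [rankOne_zero, sub_zero]
      exact ContinuousLinearMap.isPositive_zero
    have := ns_le 0 0 h0 hp
    simp only [ContinuousLinearMap.zero_apply, inner_zero_left, Complex.zero_re,
      Real.sqrt_zero] at this
    linarith [ns_nonneg 0]
  -- homogeneity
  have ns_smul_le : ∀ (c : ℂ), c ≠ 0 → ∀ g : H, ns (c • g) ≤ ‖c‖ * ns g := by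
    intro c hc g
    have hcpos : 0 < ‖c‖ := norm_pos_iff.2 hc
    have key : ∀ x ∈ {x : ℝ | ∃ L ∈ 𝓛, (L - rankOne g).IsPositive ∧
        x = Real.sqrt ((inner ℂ (L ξ) ξ : ℂ).re)}, ns (c • g) ≤ ‖c‖ * x := by
      rintro x ⟨L, hL, hp, rfl⟩
      have hL' : ((‖c‖ ^ 2 : ℝ) : ℂ) • L ∈ 𝓛 := hsmul _ (sq_nonneg _) L hL
      have hp' : (((‖c‖ ^ 2 : ℝ) : ℂ) • L - rankOne (c • g)).IsPositive := by
        apply sub_rankOne_isPositive (isPositive_real_smul (hpos L hL) (sq_nonneg _))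
        intro x
        rw [re_inner_real_smul]
        have h1 : (inner ℂ (c • g) x : ℂ) = (starRingEnd ℂ) c * inner ℂ g x :=
          inner_smul_left _ _ _
        have h2 : ‖(inner ℂ (c • g) x : ℂ)‖ ^ 2 = ‖c‖ ^ 2 * ‖(inner ℂ g x : ℂ)‖ ^ 2 := by
          rw [h1, norm_mul, RCLike.norm_conj]; ring
        rw [h2]
        exact mul_le_mul_of_nonneg_left (le_of_sub_rankOne hp x) (sq_nonneg _)
      have hle := ns_le (c • g) _ hL' hp'
      rw [re_inner_real_smul] at hle
      calc ns (c • g) ≤ Real.sqrt (‖c‖ ^ 2 * (inner ℂ (L ξ) ξ : ℂ).re) := hle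
        _ = ‖c‖ * Real.sqrt ((inner ℂ (L ξ) ξ : ℂ).re) := by
            rw [Real.sqrt_mul (sq_nonneg _), Real.sqrt_sq (norm_nonneg _)]
    have h2 : ns (c • g) / ‖c‖ ≤ ns g := by
      rw [hns g]
      apply le_csInf (hne g)
      intro x hx
      rw [div_le_iff₀ hcpos]
      calc ns (c • g) ≤ ‖c‖ * x := key x hx
        _ = x * ‖c‖ := mul_comm _ _
    calc ns (c • g) = ns (c • g) / ‖c‖ * ‖c‖ := (div_mul_cancel₀ _ (ne_of_gt hcpos)).symm
      _ ≤ ns g * ‖c‖ := mul_le_mul_of_nonneg_right h2 (norm_nonneg c)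
      _ = ‖c‖ * ns g := mul_comm _ _
  have ns_smul : ∀ (c : ℂ) (g : H), ns (c • g) = ‖c‖ * ns g := by
    intro c g
    by_cases hc : c = 0
    · subst hc
      simp [zero_smul, ns_zero]
    · refine le_antisymm (ns_smul_le c hc g) ?_
      have h := ns_smul_le c⁻¹ (inv_ne_zero hc) (c • g)
      rw [inv_smul_smul₀ hc, norm_inv] at h
      have hcpos : 0 < ‖c‖ := norm_pos_iff.2 hc
      calc ‖c‖ * ns g ≤ ‖c‖ * (‖c‖⁻¹ * ns (c • g)) :=
            mul_le_mul_of_nonneg_left h (norm_nonneg c)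
        _ = ns (c • g) := by rw [← mul_assoc, mul_inv_cancel₀ (ne_of_gt hcpos), one_mul]
  -- triangle inequality
  have ns_add : ∀ g h : H, ns (g + h) ≤ ns g + ns h := by
    intro g h
    apply real_le_of_forall_pos
    intro ε hε
    obtain ⟨L₁, hL₁, hp₁, ha⟩ := ns_approx g (ε/2) (by linarith)
    obtain ⟨L₂, hL₂, hp₂, hb⟩ := ns_approx h (ε/2) (by linarith)
    set a := Real.sqrt ((inner ℂ (L₁ ξ) ξ : ℂ).re) with hadef
    set b := Real.sqrt ((inner ℂ (L₂ ξ) ξ : ℂ).re) with hbdef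
    have ha0 : 0 ≤ a := Real.sqrt_nonneg _
    have hb0 : 0 ≤ b := Real.sqrt_nonneg _
    have main : ns (g + h) ≤ a + b := by
      apply real_le_of_forall_pos
      intro δ hδ
      have hapos : 0 < a + δ/2 := by linarith
      have hbpos : 0 < b + δ/2 := by linarith
      set t := (b + δ/2) / (a + δ/2) with htdef
      have htpos : 0 < t := div_pos hbpos hapos
      set L : H →L[ℂ] H := ((1 + t : ℝ) : ℂ) • L₁ + ((1 + t⁻¹ : ℝ) : ℂ) • L₂ with hLdef
      have hLmem : L ∈ 𝓛 := hadd _ (hsmul _ (by positivity) _ hL₁)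
        _ (hsmul _ (by positivity) _ hL₂)
      have hreL : ∀ x : H, (inner ℂ (L x) x : ℂ).re =
          (1 + t) * (inner ℂ (L₁ x) x : ℂ).re + (1 + t⁻¹) * (inner ℂ (L₂ x) x : ℂ).re := by
        intro x
        rw [hLdef]
        rw [ContinuousLinearMap.add_apply, inner_add_left, Complex.add_re,
          re_inner_real_smul, re_inner_real_smul]
      have hpt : ∀ x : H, ‖(inner ℂ (g + h) x : ℂ)‖ ^ 2 ≤ (inner ℂ (L x) x : ℂ).re := by
        intro x
        have e1 := le_of_sub_rankOne hp₁ x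
        have e2 := le_of_sub_rankOne hp₂ x
        have tri : ‖(inner ℂ (g + h) x : ℂ)‖ ≤ ‖(inner ℂ g x : ℂ)‖ + ‖(inner ℂ h x : ℂ)‖ := by
          rw [inner_add_left]; exact norm_add_le _ _
        have sq1 : ‖(inner ℂ (g + h) x : ℂ)‖ ^ 2 ≤
            (‖(inner ℂ g x : ℂ)‖ + ‖(inner ℂ h x : ℂ)‖) ^ 2 :=
          pow_le_pow_left₀ (norm_nonneg _) tri 2
        set p := ‖(inner ℂ g x : ℂ)‖
        set q := ‖(inner ℂ h x : ℂ)‖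
        have hp0 : 0 ≤ p := norm_nonneg _
        have hq0 : 0 ≤ q := norm_nonneg _
        have hti : t * t⁻¹ = 1 := mul_inv_cancel₀ (ne_of_gt htpos)
        have key2 : (p + q) ^ 2 ≤ (1 + t) * p ^ 2 + (1 + t⁻¹) * q ^ 2 := by
          have hinv : 0 < t⁻¹ := inv_pos.2 htpos
          nlinarith [sq_nonneg (t * p - q), mul_pos htpos hinv]
        rw [hreL x]
        have hL1x : 0 ≤ (inner ℂ (L₁ x) x : ℂ).re := hre L₁ hL₁ x
        have hL2x : 0 ≤ (inner ℂ (L₂ x) x : ℂ).re := hre L₂ hL₂ x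
        have hm1 : (1 + t) * p ^ 2 ≤ (1 + t) * (inner ℂ (L₁ x) x : ℂ).re :=
          mul_le_mul_of_nonneg_left e1 (by positivity)
        have hm2 : (1 + t⁻¹) * q ^ 2 ≤ (1 + t⁻¹) * (inner ℂ (L₂ x) x : ℂ).re := by
          have hinv : 0 < t⁻¹ := inv_pos.2 htpos
          exact mul_le_mul_of_nonneg_left e2 (by positivity)
        linarith
      have hp' : (L - rankOne (g + h)).IsPositive :=
        sub_rankOne_isPositive (hpos L hLmem) hpt
      have hle := ns_le (g + h) L hLmem hp'
      have ha2 : (inner ℂ (L₁ ξ) ξ : ℂ).re = a ^ 2 := (Real.sq_sqrt (hre L₁ hL₁ ξ)).symm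
      have hb2 : (inner ℂ (L₂ ξ) ξ : ℂ).re = b ^ 2 := (Real.sq_sqrt (hre L₂ hL₂ ξ)).symm
      have hbound : (inner ℂ (L ξ) ξ : ℂ).re ≤ (a + b + δ) ^ 2 := by
        rw [hreL ξ, ha2, hb2]
        have hinv : 0 < t⁻¹ := inv_pos.2 htpos
        have step1 : (1 + t) * a ^ 2 + (1 + t⁻¹) * b ^ 2 ≤
            (1 + t) * (a + δ/2) ^ 2 + (1 + t⁻¹) * (b + δ/2) ^ 2 := by
          have e1 : a ^ 2 ≤ (a + δ/2) ^ 2 := by nlinarith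
          have e2 : b ^ 2 ≤ (b + δ/2) ^ 2 := by nlinarith
          have := mul_le_mul_of_nonneg_left e1 (le_of_lt (by positivity : (0:ℝ) < 1 + t))
          have := mul_le_mul_of_nonneg_left e2 (le_of_lt (by positivity : (0:ℝ) < 1 + t⁻¹))
          linarith
        have step2 : (1 + t) * (a + δ/2) ^ 2 + (1 + t⁻¹) * (b + δ/2) ^ 2
            = (a + b + δ) ^ 2 := by
          rw [htdef]
          field_simp
          ring
        linarith
      calc ns (g + h) ≤ Real.sqrt ((inner ℂ (L ξ) ξ : ℂ).re) := hle
        _ ≤ Real.sqrt ((a + b + δ) ^ 2) := Real.sqrt_le_sqrt hbound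
        _ = a + b + δ := Real.sqrt_sq (by linarith)
    linarith
  refine ⟨⟨ns_nonneg, ns_smul, ns_add⟩, ?_⟩
  -- part (b)
  intro f
  apply le_antisymm
  · -- sup over g ≤ sup over L
    apply iSup_le; intro g
    apply iSup_le; intro hg
    apply ENNReal.le_of_forall_nnreal_lt
    intro r hr
    rcases eq_or_ne r 0 with hr0 | hr0
    · simp [hr0]
    have hrpos : (0:ℝ) < (r : ℝ) := by positivity
    rw [← ENNReal.ofReal_coe_nnreal] at hr
    have hxlt : (r : ℝ) < ‖(inner ℂ g f : ℂ)‖ :=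
      (ENNReal.ofReal_lt_ofReal_iff_of_nonneg (by positivity)).1 hr
    set x := ‖(inner ℂ g f : ℂ)‖ with hxdef
    have hxpos : 0 < x := lt_trans hrpos hxlt
    have hdiv : 1 < x / (r : ℝ) := (one_lt_div hrpos).2 hxlt
    obtain ⟨ε, hεpos, hεeq⟩ : ∃ ε > (0:ℝ), 1 + ε = x / (r : ℝ) :=
      ⟨x / (r : ℝ) - 1, by linarith, by ring⟩
    obtain ⟨L, hL, hp, hlt⟩ := ns_approx g ε hεpos
    have h1 : Real.sqrt ((inner ℂ (L ξ) ξ : ℂ).re) < 1 + ε := lt_of_lt_of_le hlt (by linarith)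
    have h1' : (inner ℂ (L ξ) ξ : ℂ).re < (1 + ε) ^ 2 := by
      nlinarith [Real.sqrt_nonneg ((inner ℂ (L ξ) ξ : ℂ).re),
        Real.sq_sqrt (hre L hL ξ)]
    set c2 := ((1 + ε) ^ 2)⁻¹ with hc2def
    have hc2pos : 0 < c2 := by positivity
    have hL' : ((c2 : ℝ) : ℂ) • L ∈ 𝓛 := hsmul _ (le_of_lt hc2pos) L hL
    have hcond : (inner ℂ ((((c2 : ℝ) : ℂ) • L) ξ) ξ : ℂ).re ≤ 1 := by
      rw [re_inner_real_smul]
      have h2 : c2 * (inner ℂ (L ξ) ξ : ℂ).re ≤ c2 * (1 + ε) ^ 2 :=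
        mul_le_mul_of_nonneg_left (le_of_lt h1') (le_of_lt hc2pos)
      have h3 : c2 * (1 + ε) ^ 2 = 1 := by
        rw [hc2def]
        field_simp
      linarith
    have h1εpos : (0:ℝ) < 1 + ε := by linarith
    have hrle : (r : ℝ) ≤ Real.sqrt ((inner ℂ ((((c2 : ℝ) : ℂ) • L) f) f : ℂ).re) := by
      rw [re_inner_real_smul]
      have hx2 : x ^ 2 ≤ (inner ℂ (L f) f : ℂ).re := le_of_sub_rankOne hp f
      have hxle : x ≤ Real.sqrt ((inner ℂ (L f) f : ℂ).re) := by
        calc x = Real.sqrt (x ^ 2) := (Real.sqrt_sq (le_of_lt hxpos)).symm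
          _ ≤ _ := Real.sqrt_le_sqrt hx2
      have hsqrtc2 : Real.sqrt c2 = (1 + ε)⁻¹ := by
        rw [hc2def, Real.sqrt_inv, Real.sqrt_sq (le_of_lt h1εpos)]
      have hrx : (r : ℝ) = (1 + ε)⁻¹ * x := by
        rw [hεeq]
        field_simp
      rw [Real.sqrt_mul (le_of_lt hc2pos), hsqrtc2, hrx]
      exact mul_le_mul_of_nonneg_left hxle (by positivity)
    have step : (r : ℝ≥0∞) ≤
        ENNReal.ofReal (Real.sqrt ((inner ℂ ((((c2 : ℝ) : ℂ) • L) f) f : ℂ).re)) := by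
      rw [← ENNReal.ofReal_coe_nnreal]
      exact ENNReal.ofReal_le_ofReal hrle
    refine step.trans ?_
    refine le_iSup_of_le (((c2 : ℝ) : ℂ) • L) ?_
    rw [iSup_pos hL', iSup_pos hcond]
  · -- sup over L ≤ sup over g
    apply iSup_le; intro L
    apply iSup_le; intro hL
    apply iSup_le; intro hcond
    set c := (inner ℂ (L f) f : ℂ).re with hcdef
    have hc0 : 0 ≤ c := hre L hL f
    rcases eq_or_lt_of_le hc0 with hc | hc
    · rw [← hc]
      simp
    have hsc : 0 < Real.sqrt c := Real.sqrt_pos.2 hc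
    set g : H := (((Real.sqrt c)⁻¹ : ℝ) : ℂ) • (L f) with hgdef
    have hp : (L - rankOne g).IsPositive := by
      apply sub_rankOne_isPositive (hpos L hL)
      intro x
      have h1 : (inner ℂ g x : ℂ) = (((Real.sqrt c)⁻¹ : ℝ) : ℂ) * inner ℂ (L f) x := by
        rw [hgdef, inner_smul_left, Complex.conj_ofReal]
      have h2 : ‖(inner ℂ g x : ℂ)‖ ^ 2 = c⁻¹ * ‖(inner ℂ (L f) x : ℂ)‖ ^ 2 := by
        rw [h1, norm_mul]
        have : ‖((((Real.sqrt c)⁻¹ : ℝ)) : ℂ)‖ = (Real.sqrt c)⁻¹ := by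
          rw [Complex.norm_real, Real.norm_eq_abs, abs_of_nonneg (by positivity)]
        rw [this, mul_pow, ← Real.sqrt_inv]
        rw [Real.sq_sqrt (by positivity)]
      rw [h2]
      have hcs := cs (hpos L hL) f x
      rw [← hcdef] at hcs
      rw [inv_mul_le_iff₀ hc]
      exact hcs
    have hg1 : ns g ≤ 1 := by
      calc ns g ≤ Real.sqrt ((inner ℂ (L ξ) ξ : ℂ).re) := ns_le g L hL hp
        _ ≤ 1 := Real.sqrt_le_one.mpr hcond
    have hval : ‖(inner ℂ g f : ℂ)‖ = Real.sqrt c := by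
      have h1 : (inner ℂ g f : ℂ) = (((Real.sqrt c)⁻¹ : ℝ) : ℂ) * inner ℂ (L f) f := by
        rw [hgdef, inner_smul_left, Complex.conj_ofReal]
      have h2 : (inner ℂ (L f) f : ℂ) = ((c : ℝ) : ℂ) := by
        rw [hcdef]
        exact ((isPositive_complex.1 (hpos L hL) f).1).symm
      rw [h1, h2, ← Complex.ofReal_mul]
      have h3 : (Real.sqrt c)⁻¹ * c = Real.sqrt c := by
        rw [inv_mul_eq_div, div_eq_iff (ne_of_gt hsc), Real.mul_self_sqrt hc0]
      rw [h3, Complex.norm_real, Real.norm_eq_abs, abs_of_nonneg (Real.sqrt_nonneg c)]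
    calc ENNReal.ofReal (Real.sqrt c) = ENNReal.ofReal ‖(inner ℂ g f : ℂ)‖ := by rw [hval]
      _ ≤ _ := by
          apply le_iSup_of_le g
          rw [iSup_pos hg1]
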